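/- The dihedral group of order 6 is a quotient of the group with presentation ⟨a, b ∣ a³ = b²⟩ (the trefoil knot group); in particular the trefoil knot group is nonabelian, hence not isomorphic to ℤ (the unknot group). -/

import Mathlib

namespace TrefoilAux

abbrev rels : Set (FreeGroup Bool) :=
  {FreeGroup.of true ^ 3 * (FreeGroup.of false ^ 2)⁻¹}

def gen : Bool → Equiv.Perm (Fin 3) :=
  fun b => if b then Equiv.swap 0 1 * Equiv.swap 1 2 else Equiv.swap 0 1

lemma relsOne : ∀ r ∈ rels, FreeGroup.lift gen r = 1 := by
  intro r hr
  simp only [rels, Set.mem_singleton_iff] at hr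
  subst hr
  simp only [map_mul, map_pow, map_inv, FreeGroup.lift_apply_of, gen]
  decide

noncomputable def φ : PresentedGroup rels →* Equiv.Perm (Fin 3) :=
  PresentedGroup.toGroup relsOne

lemma φ_of (b : Bool) : φ (PresentedGroup.of b) = gen b :=
  PresentedGroup.toGroup.of relsOne

lemma φ_surj : Function.Surjective φ := by
  intro y
  have ht := φ_of true
  have hf := φ_of false
  fin_cases y
  · exact ⟨1, by rw [map_one]; decide⟩
  · exact ⟨PresentedGroup.of false * PresentedGroup.of true, by rw [map_mul, hf, ht]; decide⟩
  · exact ⟨PresentedGroup.of false, by rw [hf]; decide⟩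
  · exact ⟨PresentedGroup.of true, by rw [ht]; decide⟩
  · exact ⟨PresentedGroup.of true * PresentedGroup.of false, by rw [map_mul, ht, hf]; decide⟩
  · exact ⟨PresentedGroup.of true * PresentedGroup.of true, by rw [map_mul, ht]; decide⟩

lemma noncomm : PresentedGroup.of (rels := rels) true * PresentedGroup.of false ≠
    PresentedGroup.of false * PresentedGroup.of true := by
  intro h
  have := congrArg φ h
  rw [map_mul, map_mul, φ_of, φ_of] at this
  revert this
  decide

end TrefoilAux

theorem trefoil_group_not_Z :
    (∃ f : PresentedGroup
        ({FreeGroup.of true ^ 3 * (FreeGroup.of false ^ 2)⁻¹} : Set (FreeGroup Bool)) →*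
        Equiv.Perm (Fin 3), Function.Surjective f) ∧
    (∃ g h : PresentedGroup
        ({FreeGroup.of true ^ 3 * (FreeGroup.of false ^ 2)⁻¹} : Set (FreeGroup Bool)),
        g * h ≠ h * g) ∧
    IsEmpty (PresentedGroup
        ({FreeGroup.of true ^ 3 * (FreeGroup.of false ^ 2)⁻¹} : Set (FreeGroup Bool)) ≃*
      Multiplicative ℤ) := by
  refine ⟨⟨TrefoilAux.φ, TrefoilAux.φ_surj⟩,
    ⟨PresentedGroup.of true, PresentedGroup.of false, TrefoilAux.noncomm⟩, ⟨fun e => ?_⟩⟩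
  exact TrefoilAux.noncomm (e.injective (by rw [map_mul, map_mul, mul_comm]))
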